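/- Let P, Q ∈ GL⁺(H) be such that P, Q and the frame operator S_Λ pairwise commute. Then the following are equivalent: (i) (Λ_w)_{w∈Ω} is a (P, Q)-controlled continuous g-Bessel family with bound B, i.e. Re ∫_Ω ⟨Λ_w P f, Λ_w Q f⟩ dμ(w) ≤ B‖f‖² for all f ∈ H; (ii) there is a bounded linear operator U : L²(Ω, μ; L) → H with ‖U‖ ≤ √B such that ⟨U F, g⟩ = ∫_Ω ⟨F(w), Λ_w (QP)^{1/2} g⟩ dμ(w) for every F ∈ L²(Ω, μ; L) and g ∈ H. -/

import Mathlib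

open MeasureTheory
open scoped ComplexInnerProductSpace ENNReal

open Polynomial

theorem commute_cfc {H : Type*} [NormedAddCommGroup H] [InnerProductSpace ℂ H] [CompleteSpace H]
    (S C : H →L[ℂ] H) (hC : IsSelfAdjoint C) (h : Commute S C) (g : ℝ → ℝ) :
    Commute S (cfc g C) := by
  by_cases hg : ContinuousOn g (spectrum ℝ C)
  · rw [cfc_apply g C hC hg]
    set σ := spectrum ℝ C with hσ
    set φ := cfcHom hC (R := ℝ) with hφ
    have hφc : Continuous φ := (cfcHom_isClosedEmbedding hC).continuous
    have hWclosed : IsClosed {f : C(σ, ℝ) | Commute S (φ f)} := by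
      have hcont : Continuous fun f : C(σ, ℝ) => S * φ f - φ f * S := by fun_prop
      have : {f : C(σ, ℝ) | Commute S (φ f)}
          = (fun f : C(σ, ℝ) => S * φ f - φ f * S) ⁻¹' {0} := by
        ext f
        simp only [Commute, SemiconjBy, Set.mem_preimage, Set.mem_singleton_iff, sub_eq_zero,
          Set.mem_setOf_eq]
      rw [this]
      exact isClosed_singleton.preimage hcont
    have hψX : φ ((toContinuousMapOnAlgHom σ) X) = C := by
      have hid : (toContinuousMapOnAlgHom σ) X = (ContinuousMap.id ℝ).restrict σ := by
        ext x; simp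
      rw [hid, hφ, cfcHom_id hC]
    have hsub : (polynomialFunctions σ : Set C(σ, ℝ)) ⊆ {f : C(σ, ℝ) | Commute S (φ f)} := by
      rw [polynomialFunctions_coe]
      rintro _ ⟨p, rfl⟩
      have : φ ((toContinuousMapOnAlgHom σ) p) = aeval C p := by
        have := aeval_algHom_apply (φ.toAlgHom.comp (toContinuousMapOnAlgHom σ)) X p
        simp only [AlgHom.coe_comp, Function.comp_apply, StarAlgHom.coe_toAlgHom, hψX,
          aeval_X_left_apply] at this
        exact this.symm
      have hcomm : ∀ q : ℝ[X], Commute S (aeval C q) := by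
        intro q
        induction q using Polynomial.induction_on' with
        | add p q hp hq => rw [map_add]; exact hp.add_right hq
        | monomial n a =>
          rw [aeval_monomial]
          have h1 : Commute S ((algebraMap ℝ (H →L[ℂ] H)) a) := (Algebra.commutes a S).symm
          exact h1.mul_right (h.pow_right n)
      show Commute S (φ _)
      rw [this]
      exact hcomm p
    have hdense : closure (polynomialFunctions σ : Set C(σ, ℝ)) = Set.univ := by
      have := polynomialFunctions.topologicalClosure σ
      rw [← Subalgebra.topologicalClosure_coe, this]
      simp
    have : ((⟨σ.restrict g, hg.restrict⟩ : C(σ, ℝ))) ∈ closure (polynomialFunctions σ : Set C(σ, ℝ)) := by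
      rw [hdense]; trivial
    exact hWclosed.closure_subset_iff.mpr hsub this
  · rw [cfc_apply_of_not_continuousOn C hg]
    exact Commute.zero_right S

theorem commute_S_R {H : Type*} [NormedAddCommGroup H] [InnerProductSpace ℂ H] [CompleteSpace H]
    (P Q SΛ R : H →L[ℂ] H) (hP : P.IsPositive) (hQ : Q.IsPositive)
    (hPQ : P * Q = Q * P) (hPS : P * SΛ = SΛ * P) (hQS : Q * SΛ = SΛ * Q)
    (hR : R.IsPositive) (hRsq : R * R = Q * P) :
    Commute SΛ R := by
  have hQPsa : IsSelfAdjoint (Q * P) := by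
    rw [IsSelfAdjoint, star_mul, hP.isSelfAdjoint.star_eq, hQ.isSelfAdjoint.star_eq, hPQ]
  have hSQP : Commute SΛ (Q * P) := by
    show SΛ * (Q * P) = (Q * P) * SΛ
    rw [← mul_assoc, ← hQS, mul_assoc, ← hPS, ← mul_assoc]
  have hRsa : IsSelfAdjoint R := hR.isSelfAdjoint
  have hRnn : (0 : H →L[ℂ] H) ≤ R := (ContinuousLinearMap.nonneg_iff_isPositive R).mpr hR
  have hReq : R = cfc Real.sqrt (Q * P) := by
    have h1 : R = cfc (id : ℝ → ℝ) R := (cfc_id ℝ R).symm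
    have h2 : cfc (id : ℝ → ℝ) R = cfc (fun t : ℝ => Real.sqrt (t ^ 2)) R := by
      apply cfc_congr
      intro x hx
      simp [Real.sqrt_sq (spectrum_nonneg_of_nonneg hRnn hx)]
    have h3 : cfc (fun t : ℝ => Real.sqrt (t ^ 2)) R
        = cfc Real.sqrt (cfc (fun t : ℝ => t ^ 2) R) := cfc_comp' Real.sqrt (· ^ 2) R
    have h4 : cfc (fun t : ℝ => t ^ 2) R = Q * P := by
      rw [cfc_pow_id R 2, pow_two, hRsq]
    rw [h1, h2, h3, h4]
  rw [hReq]
  exact commute_cfc SΛ (Q * P) hQPsa hSQP Real.sqrt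

/-- `(Λ_w)` is a `(P, Q)`-controlled continuous g-Bessel family with bound `B`
iff the synthesis-type operator `U : L²(Ω, μ; L) → H` with
`⟨U F, g⟩ = ∫ ⟨F(w), Λ_w (QP)^{1/2} g⟩ dμ` exists as a bounded operator with `‖U‖ ≤ √B`. -/
theorem controlled_bessel_iff_synthesis_operator
    {H L Ω : Type*}
    [NormedAddCommGroup H] [InnerProductSpace ℂ H] [CompleteSpace H]
    [NormedAddCommGroup L] [InnerProductSpace ℂ L] [CompleteSpace L]
    [MeasurableSpace Ω] (μ : Measure Ω)
    (Λ : Ω → H →L[ℂ] L)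
    (hmeas : ∀ f : H, AEStronglyMeasurable (fun w => Λ w f) μ)
    (hint : ∀ f : H, Integrable (fun w => ‖Λ w f‖ ^ 2) μ)
    -- (Λ_w) is a continuous g-Bessel family
    (B₀ : ℝ) (hB₀ : 0 < B₀)
    (hBessel : ∀ f : H, ∫ w, ‖Λ w f‖ ^ 2 ∂μ ≤ B₀ * ‖f‖ ^ 2)
    -- P, Q ∈ GL⁺(H)
    (P Q Pinv Qinv : H →L[ℂ] H)
    (hP : P.IsPositive) (hPinv : P * Pinv = 1 ∧ Pinv * P = 1)
    (hQ : Q.IsPositive) (hQinv : Q * Qinv = 1 ∧ Qinv * Q = 1)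
    -- the frame operator S_Λ
    (SΛ : H →L[ℂ] H)
    (hSΛ : ∀ f g : H, ⟪SΛ f, g⟫ = ∫ w, ⟪Λ w f, Λ w g⟫ ∂μ)
    -- P, Q, S_Λ pairwise commute
    (hPQ : P * Q = Q * P) (hPS : P * SΛ = SΛ * P) (hQS : Q * SΛ = SΛ * Q)
    -- R = (QP)^{1/2}, the positive square root of QP
    (R : H →L[ℂ] H) (hR : R.IsPositive) (hRsq : R * R = Q * P)
    (B : ℝ) (hB : 0 < B) :
    (∀ f : H, (∫ w, ⟪Λ w (P f), Λ w (Q f)⟫ ∂μ).re ≤ B * ‖f‖ ^ 2) ↔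
    (∃ U : Lp L 2 μ →L[ℂ] H, ‖U‖ ≤ Real.sqrt B ∧
      ∀ (F : Lp L 2 μ) (g : H), ⟪U F, g⟫ = ∫ w, ⟪F w, Λ w (R g)⟫ ∂μ) := by
  -- the analysis map
  have hmem : ∀ f : H, MemLp (fun w => Λ w f) 2 μ := fun f =>
    (memLp_two_iff_integrable_sq_norm (hmeas f)).mpr (hint f)
  set T : H → Lp L 2 μ := fun f => (hmem (R f)).toLp _ with hT
  have hTcoe : ∀ f : H, (T f : Ω → L) =ᵐ[μ] fun w => Λ w (R f) := fun f =>
    (hmem (R f)).coeFn_toLp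
  have hSR : Commute SΛ R := commute_S_R P Q SΛ R hP hQ hPQ hPS hQS hR hRsq
  -- the key identity
  have hkey : ∀ f : H, ⟪T f, T f⟫ = ∫ w, ⟪Λ w (P f), Λ w (Q f)⟫ ∂μ := by
    intro f
    have e1 : ⟪T f, T f⟫ = ⟪SΛ (R f), R f⟫ := by
      rw [MeasureTheory.L2.inner_def, hSΛ]
      refine integral_congr_ae ?_
      filter_upwards [hTcoe f] with w h1
      rw [h1]
    have e2 : (∫ w, ⟪Λ w (P f), Λ w (Q f)⟫ ∂μ) = ⟪SΛ (P f), Q f⟫ := (hSΛ (P f) (Q f)).symm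
    rw [e1, e2]
    have hQsa : IsSelfAdjoint Q := hQ.isSelfAdjoint
    have hRsa : IsSelfAdjoint R := hR.isSelfAdjoint
    calc ⟪SΛ (R f), R f⟫ = ⟪R (SΛ (R f)), f⟫ := by
            exact (ContinuousLinearMap.isSelfAdjoint_iff_isSymmetric.mp hRsa (SΛ (R f)) f).symm
      _ = ⟪SΛ (Q (P f)), f⟫ := by
            congr 1
            calc R (SΛ (R f)) = (R * SΛ) (R f) := rfl
              _ = (SΛ * R) (R f) := by rw [hSR.eq]
              _ = SΛ ((R * R) f) := rfl
              _ = SΛ (Q (P f)) := by rw [hRsq]; rfl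
      _ = ⟪Q (SΛ (P f)), f⟫ := by
            congr 1
            calc SΛ (Q (P f)) = (SΛ * Q) (P f) := rfl
              _ = (Q * SΛ) (P f) := by rw [← hQS]
              _ = Q (SΛ (P f)) := rfl
      _ = ⟪SΛ (P f), Q f⟫ := by
            exact ContinuousLinearMap.isSelfAdjoint_iff_isSymmetric.mp hQsa (SΛ (P f)) f
  have hnormsq : ∀ f : H, ‖T f‖ ^ 2 = (⟪T f, T f⟫).re := fun f =>
    (inner_self_eq_norm_sq (𝕜 := ℂ) (T f)).symm
  constructor
  · -- (i) → (ii)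
    intro hcb
    have hbound : ∀ f : H, ‖T f‖ ≤ Real.sqrt B * ‖f‖ := by
      intro f
      have h1 : ‖T f‖ ^ 2 ≤ B * ‖f‖ ^ 2 := by
        rw [hnormsq f, hkey f]; exact hcb f
      have h2 : ‖T f‖ = Real.sqrt (‖T f‖ ^ 2) := (Real.sqrt_sq (norm_nonneg _)).symm
      rw [h2]
      calc Real.sqrt (‖T f‖ ^ 2) ≤ Real.sqrt (B * ‖f‖ ^ 2) := Real.sqrt_le_sqrt h1
        _ = Real.sqrt B * ‖f‖ := by
            rw [Real.sqrt_mul hB.le, Real.sqrt_sq (norm_nonneg _)]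
    let Tlin : H →ₗ[ℂ] Lp L 2 μ :=
      { toFun := T
        map_add' := by
          intro a b
          show (hmem (R (a + b))).toLp _ = (hmem (R a)).toLp _ + (hmem (R b)).toLp _
          rw [← MemLp.toLp_add (hmem (R a)) (hmem (R b))]
          exact MemLp.toLp_congr _ _ (Filter.Eventually.of_forall fun w => by
            simp [map_add])
        map_smul' := by
          intro c a
          show (hmem (R (c • a))).toLp _ = c • (hmem (R a)).toLp _
          rw [← MemLp.toLp_const_smul c (hmem (R a))]
          exact MemLp.toLp_congr _ _ (Filter.Eventually.of_forall fun w => by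
            simp [_root_.map_smul]) }
    let Tc : H →L[ℂ] Lp L 2 μ := Tlin.mkContinuous (Real.sqrt B) hbound
    refine ⟨ContinuousLinearMap.adjoint Tc, ?_, ?_⟩
    · calc ‖ContinuousLinearMap.adjoint Tc‖ = ‖Tc‖ :=
            LinearIsometryEquiv.norm_map ContinuousLinearMap.adjoint Tc
        _ ≤ Real.sqrt B := Tlin.mkContinuous_norm_le (Real.sqrt_nonneg B) hbound
    · intro F g
      rw [ContinuousLinearMap.adjoint_inner_left, MeasureTheory.L2.inner_def]
      refine integral_congr_ae ?_
      have : (Tc g : Ω → L) =ᵐ[μ] fun w => Λ w (R g) := hTcoe g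
      filter_upwards [this] with w h1
      rw [h1]
  · -- (ii) → (i)
    rintro ⟨U, hU, hUF⟩ f
    have h0 : ⟪U (T f), f⟫ = ⟪T f, T f⟫ := by
      rw [hUF (T f) f, MeasureTheory.L2.inner_def]
      refine (integral_congr_ae ?_).symm
      filter_upwards [hTcoe f] with w h1
      rw [h1]
    have h1 : ‖T f‖ ^ 2 ≤ Real.sqrt B * ‖T f‖ * ‖f‖ := by
      rw [hnormsq f, ← h0]
      calc (⟪U (T f), f⟫).re ≤ ‖⟪U (T f), f⟫‖ := Complex.re_le_norm _
        _ ≤ ‖U (T f)‖ * ‖f‖ := norm_inner_le_norm _ _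
        _ ≤ (‖U‖ * ‖T f‖) * ‖f‖ :=
            mul_le_mul_of_nonneg_right (U.le_opNorm (T f)) (norm_nonneg f)
        _ ≤ Real.sqrt B * ‖T f‖ * ‖f‖ := by
            have := mul_le_mul_of_nonneg_right hU (norm_nonneg (T f))
            exact mul_le_mul_of_nonneg_right this (norm_nonneg f)
    have h2 : ‖T f‖ ≤ Real.sqrt B * ‖f‖ := by
      rcases eq_or_lt_of_le (norm_nonneg (T f)) with h3 | h3
      · rw [← h3]; positivity
      · have h4 : ‖T f‖ * ‖T f‖ ≤ (Real.sqrt B * ‖f‖) * ‖T f‖ := by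
          calc ‖T f‖ * ‖T f‖ = ‖T f‖ ^ 2 := (sq (‖T f‖)).symm
            _ ≤ Real.sqrt B * ‖T f‖ * ‖f‖ := h1
            _ = (Real.sqrt B * ‖f‖) * ‖T f‖ := by ring
        exact le_of_mul_le_mul_right h4 h3
    have h5 : ‖T f‖ ^ 2 ≤ B * ‖f‖ ^ 2 := by
      calc ‖T f‖ ^ 2 ≤ (Real.sqrt B * ‖f‖) ^ 2 := by
            exact pow_le_pow_left₀ (norm_nonneg _) h2 2
        _ = B * ‖f‖ ^ 2 := by
            rw [mul_pow, Real.sq_sqrt hB.le]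
    rw [← hkey f, ← hnormsq f]
    exact h5
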